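/- Let E : A → D be a conditional expectation. Then L̃₀(a) = ‖a − E(a)‖_E is a Leibniz seminorm on A: L̃₀(ab) ≤ ‖a‖ L̃₀(b) + L̃₀(a) ‖b‖ and L̃₀(1) = 0. -/

import Mathlib

open ComplexStarModule

/-- The norm ‖x‖_E = ‖E(x*x)‖^{1/2} associated to a map E on a C*-algebra. -/
noncomputable def normE {A : Type*} [NormedRing A] [StarRing A] [CStarRing A]
    [NormedAlgebra ℂ A] [StarModule ℂ A] (E : A →ₗ[ℂ] A) (x : A) : ℝ :=
  Real.sqrt ‖E (star x * x)‖

/-- For a conditional expectation E : A → D, the quotient seminorm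
L̃₀(a) = ‖a − E(a)‖_E is Leibniz: L̃₀(1) = 0 and L̃₀(ab) ≤ ‖a‖L̃₀(b) + L̃₀(a)‖b‖. -/
theorem condExp_quotient_leibniz {A : Type*} [NormedRing A] [StarRing A]
    [CStarRing A] [NormedAlgebra ℂ A] [StarModule ℂ A] [CompleteSpace A]
    [PartialOrder A] [StarOrderedRing A]
    (D : StarSubalgebra ℂ A)
    (E : A →ₗ[ℂ] A) (hrange : ∀ a, E a ∈ D) (hproj : ∀ d ∈ D, E d = d)
    (hpos : ∀ a : A, 0 ≤ E (star a * a))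
    (hbimod : ∀ c ∈ D, ∀ d ∈ D, ∀ a : A, E (c * a * d) = c * E a * d) :
    normE E ((1 : A) - E 1) = 0 ∧
      ∀ a b : A, normE E (a * b - E (a * b)) ≤
        ‖a‖ * normE E (b - E b) + normE E (a - E a) * ‖b‖ := by
  rcases subsingleton_or_nontrivial A with hsub | hnt
  · constructor
    · simp [normE, Subsingleton.elim ((1:A) - E 1) 0, Subsingleton.elim (E 0) 0]
    · intro a b
      have h0 : ∀ v : A, normE E v = 0 := by
        intro v
        simp [normE, Subsingleton.elim (E (star v * v)) 0]
      simp [h0, Subsingleton.elim a 0]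
  letI : CStarAlgebra A := {}
  have h1D : (1:A) ∈ D := D.one_mem
  have hE1 : E 1 = 1 := hproj 1 h1D
  have hleft : ∀ d ∈ D, ∀ x : A, E (d * x) = d * E x := by
    intro d hd x; simpa using hbimod d hd 1 h1D x
  have hright : ∀ (x : A), ∀ d ∈ D, E (x * d) = E x * d := by
    intro x d hd; simpa using hbimod 1 h1D d hd x
  -- E preserves positivity
  have hEpos : ∀ a : A, 0 ≤ a → 0 ≤ E a := by
    intro a ha
    have h := hpos (CFC.sqrt a)
    rwa [(IsSelfAdjoint.of_nonneg (CFC.sqrt_nonneg _)).star_eq, CFC.sqrt_mul_sqrt_self a ha] at h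
  have hEmono : ∀ {a b : A}, a ≤ b → E a ≤ E b := by
    intro a b hab
    have := hEpos _ (sub_nonneg.mpr hab)
    rw [map_sub] at this
    exact sub_nonneg.mp this
  -- E is star preserving
  have hEsa : ∀ x : A, IsSelfAdjoint x → IsSelfAdjoint (E x) := by
    intro x hx
    rw [← CFC.posPart_sub_negPart x hx, map_sub]
    exact ((hEpos _ (CFC.posPart_nonneg x)).isSelfAdjoint).sub
      ((hEpos _ (CFC.negPart_nonneg x)).isSelfAdjoint)
  have hEstar : ∀ a : A, E (star a) = star (E a) := by
    intro a
    have hr := (hEsa _ (ℜ a).2).star_eq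
    have hi := (hEsa _ (ℑ a).2).star_eq
    have ha : (ℜ a : A) + Complex.I • (ℑ a : A) = a := realPart_add_I_smul_imaginaryPart a
    rw [← ha]
    simp only [star_add, star_smul, map_add, map_smul, Complex.star_def, Complex.conj_I,
      (ℜ a).2.star_eq, (ℑ a).2.star_eq, hr, hi, neg_smul, map_neg]
  -- scalar helpers
  have hsmulC : ∀ (r : ℝ) (v : A), (r : ℂ) • v = r • v := fun r v => by
    rw [← smul_one_smul A (r:ℂ) v]; norm_num
  have hEsmulR : ∀ (r : ℝ) (v : A), E (r • v) = r • E v := fun r v => by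
    rw [← hsmulC, map_smul, hsmulC]
  have hstar_smul : ∀ (r : ℝ) (v : A), star (r • v) = r • star v := fun r v => by
    rw [← hsmulC, star_smul, Complex.star_def, Complex.conj_ofReal, hsmulC]
  have hsmul_le : ∀ (r : ℝ), 0 ≤ r → ∀ {u v : A}, u ≤ v → r • u ≤ r • v := by
    intro r hr u v huv
    have hc := star_left_conjugate_le_conjugate huv (Real.sqrt r • (1:A))
    have hsa : star (Real.sqrt r • (1:A)) = Real.sqrt r • (1:A) := by
      rw [hstar_smul, star_one]
    rw [hsa] at hc
    have key : ∀ w : A, (Real.sqrt r • (1:A)) * w * (Real.sqrt r • (1:A)) = r • w := by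
      intro w
      rw [smul_mul_assoc, one_mul, mul_smul_comm, mul_one, smul_smul, Real.mul_self_sqrt hr]
    rwa [key, key] at hc
  have hnormE_nonneg : ∀ x : A, 0 ≤ normE E x := fun x => Real.sqrt_nonneg _
  have hnormE_sq : ∀ x : A, normE E x ^ 2 = ‖E (star x * x)‖ := fun x =>
    Real.sq_sqrt (norm_nonneg _)
  -- Cauchy-Schwarz
  have hCS : ∀ x y : A, ‖E (star x * y)‖ ≤ normE E x * normE E y := by
    intro x y
    set z := E (star x * y) with hzdef
    have hzD : z ∈ D := hrange _
    set nx : ℝ := ‖E (star x * x)‖ with hnx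
    set ny : ℝ := ‖E (star y * y)‖ with hny
    have hzyx : E (star y * x) = star z := by
      rw [show star y * x = star (star x * y) by simp [star_mul], hEstar]
    have key : ∀ ε : ℝ, 0 < ε → ‖z‖^2 ≤ (nx + ε) * ny := by
      intro ε hε
      have hc : (0:ℝ) < nx + ε := by positivity
      set t : ℝ := 1 / (nx + ε) with htdef
      have ht : 0 < t := by positivity
      set zt : A := t • z with hzt
      have hztD : zt ∈ D := by rw [hzt, ← hsmulC]; exact D.smul_mem hzD _
      have hsztD : star zt ∈ D := star_mem hztD
      set w : A := y - x * zt with hw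
      set SZ : A := star z * z with hSZ
      have hSZnn : (0:A) ≤ SZ := star_mul_self_nonneg z
      -- the three cross terms
      have ha1 : E (star y * (x * zt)) = t • SZ := by
        rw [hzt, hSZ]
        simp only [mul_smul_comm]
        rw [hEsmulR, ← mul_assoc, hright _ _ hzD, hzyx]
      have ha2 : E ((star zt * star x) * y) = t • SZ := by
        rw [hzt, hSZ, hstar_smul]
        simp only [smul_mul_assoc]
        rw [hEsmulR, mul_assoc, hleft _ (star_mem hzD), ← hzdef]
      have ha3 : E ((star zt * star x) * (x * zt)) = star zt * E (star x * x) * zt := by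
        have : (star zt * star x) * (x * zt) = star zt * (star x * x) * zt := by
          noncomm_ring
        rw [this, hbimod _ hsztD _ hztD]
      -- expansion
      have hsw : star w = star y - star zt * star x := by
        rw [hw, star_sub, star_mul]
      have hwexp : star w * w = star y * y - star y * (x * zt) - ((star zt * star x) * y)
          + ((star zt * star x) * (x * zt)) := by
        rw [hsw, hw]; noncomm_ring
      have hEw : E (star w * w) = E (star y * y) - t • SZ - t • SZ
          + star zt * E (star x * x) * zt := by
        rw [hwexp, map_add, map_sub, map_sub, ha1, ha2, ha3]
      -- bound the conjugated term
      have hconj : star zt * E (star x * x) * zt ≤ (t^2 * nx) • SZ := by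
        have h1 : E (star x * x) ≤ algebraMap ℝ A nx :=
          IsSelfAdjoint.le_algebraMap_norm_self (IsSelfAdjoint.of_nonneg (hpos x))
        have h2 := star_left_conjugate_le_conjugate h1 zt
        have h3 : star zt * algebraMap ℝ A nx * zt = (t^2 * nx) • SZ := by
          rw [Algebra.algebraMap_eq_smul_one, hzt, hSZ, hstar_smul]
          simp only [smul_mul_assoc, mul_smul_comm, mul_one]
          module
        rwa [h3] at h2
      -- combine
      have h5 : (t • SZ + t • SZ) - star zt * E (star x * x) * zt ≤ E (star y * y) := by
        have h0' : 0 ≤ E (star y * y) - ((t • SZ + t • SZ) - star zt * E (star x * x) * zt) := by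
          have heq : E (star y * y) - ((t • SZ + t • SZ) - star zt * E (star x * x) * zt)
              = E (star y * y) - t • SZ - t • SZ + star zt * E (star x * x) * zt := by abel
          rw [heq, ← hEw]; exact hpos w
        exact sub_nonneg.mp h0'
      have h6 : (2 * t - t^2 * nx) • SZ ≤ E (star y * y) := by
        have heq : (2 * t - t^2 * nx) • SZ = (t • SZ + t • SZ) - (t^2 * nx) • SZ := by
          rw [sub_smul]
          congr 1
          rw [two_mul, add_smul]
        rw [heq]
        calc t • SZ + t • SZ - (t^2 * nx) • SZ
            ≤ t • SZ + t • SZ - star zt * E (star x * x) * zt :=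
              sub_le_sub_left hconj _
          _ ≤ E (star y * y) := h5
      -- take norms
      set β : ℝ := 2 * t - t^2 * nx with hβdef
      have hnxc : nx ≤ nx + ε := by linarith
      have htnx : t * nx ≤ 1 := by
        rw [htdef]
        rw [div_mul_eq_mul_div, one_mul, div_le_one hc]
        exact hnxc
      have hβpos : 0 < β := by nlinarith [sq_nonneg t]
      have hβSZnn : (0:A) ≤ β • SZ := by
        have := hsmul_le β hβpos.le hSZnn
        rwa [smul_zero] at this
      have h7 : ‖β • SZ‖ ≤ ny := CStarAlgebra.norm_le_norm_of_nonneg_of_le hβSZnn h6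
      have h8 : β * ‖z‖^2 ≤ ny := by
        have : ‖β • SZ‖ = β * ‖z‖^2 := by
          rw [norm_smul, Real.norm_of_nonneg hβpos.le, hSZ, CStarRing.norm_star_mul_self, sq]
        rwa [this] at h7
      -- conclude
      have hβc : 1 ≤ β * (nx + ε) := by
        have : β * (nx + ε) = 2 * (t * (nx + ε)) - (t * nx) * (t * (nx+ε)) := by ring
        rw [this, htdef, one_div_mul_cancel hc.ne']
        nlinarith
      nlinarith [sq_nonneg ‖z‖, norm_nonneg z, hc, mul_le_mul_of_nonneg_left hβc (sq_nonneg ‖z‖)]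
    -- pass to the limit ε → 0
    have hfin : ‖z‖^2 ≤ nx * ny := by
      refine le_of_forall_pos_le_add fun ε hε => ?_
      rcases eq_or_lt_of_le (show (0:ℝ) ≤ ny from norm_nonneg _) with h | h
      · have := key 1 one_pos
        rw [← h] at this ⊢
        simpa using this.trans (by linarith)
      · have := key (ε / ny) (div_pos hε h)
        calc ‖z‖^2 ≤ (nx + ε / ny) * ny := this
          _ = nx * ny + ε := by field_simp
    have hz2 : ‖z‖ ≤ Real.sqrt (nx * ny) := by
      rw [show ‖z‖ = Real.sqrt (‖z‖^2) from (Real.sqrt_sq (norm_nonneg z)).symm]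
      exact Real.sqrt_le_sqrt hfin
    calc ‖z‖ ≤ Real.sqrt (nx * ny) := hz2
      _ = normE E x * normE E y := by
          rw [Real.sqrt_mul (norm_nonneg _)]
          rfl
  -- triangle inequality for normE
  have hTri : ∀ u v : A, normE E (u + v) ≤ normE E u + normE E v := by
    intro u v
    have hexp : star (u + v) * (u + v)
        = star u * u + star u * v + star v * u + star v * v := by
      rw [star_add]; noncomm_ring
    have h1 : ‖E (star (u+v) * (u+v))‖ ≤ (normE E u + normE E v)^2 := by
      rw [hexp, map_add, map_add, map_add]
      calc ‖E (star u * u) + E (star u * v) + E (star v * u) + E (star v * v)‖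
          ≤ ‖E (star u * u)‖ + ‖E (star u * v)‖ + ‖E (star v * u)‖ + ‖E (star v * v)‖ := by
            refine (norm_add_le _ _).trans ?_
            gcongr <;> exact (norm_add_le _ _).trans (by gcongr; exact norm_add_le _ _)
        _ ≤ normE E u ^2 + normE E u * normE E v + normE E v * normE E u + normE E v ^2 := by
            gcongr
            · rw [← hnormE_sq]
            · exact hCS u v
            · exact hCS v u
            · rw [← hnormE_sq]
        _ = (normE E u + normE E v)^2 := by ring
    rw [normE, show normE E u + normE E v
        = Real.sqrt ((normE E u + normE E v)^2) from
        (Real.sqrt_sq (add_nonneg (hnormE_nonneg u) (hnormE_nonneg v))).symm]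
    exact Real.sqrt_le_sqrt h1
  -- key quadratic identity
  have hQ : ∀ x : A, E (star (x - E x) * (x - E x)) = E (star x * x) - star (E x) * E x := by
    intro x
    have hxD := hrange x
    have hsxD := star_mem hxD
    have hexp : star (x - E x) * (x - E x)
        = star x * x - star x * E x - star (E x) * x + star (E x) * E x := by
      rw [star_sub]; noncomm_ring
    rw [hexp, map_add, map_sub, map_sub, hright _ _ hxD, hleft _ hsxD,
      hproj _ (D.mul_mem hsxD hxD), hEstar]
    abel
  -- normE (x - E x) ≤ normE x
  have hred : ∀ x : A, normE E (x - E x) ≤ normE E x := by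
    intro x
    have h1 : E (star (x - E x) * (x - E x)) ≤ E (star x * x) := by
      rw [hQ x]
      exact sub_le_self _ (star_mul_self_nonneg (E x))
    have h2 : ‖E (star (x - E x) * (x - E x))‖ ≤ ‖E (star x * x)‖ :=
      CStarAlgebra.norm_le_norm_of_nonneg_of_le (hpos _) h1
    exact Real.sqrt_le_sqrt h2
  -- normE (a * y) ≤ ‖a‖ * normE y
  have hmull : ∀ a y : A, normE E (a * y) ≤ ‖a‖ * normE E y := by
    intro a y
    have hexp : star (a * y) * (a * y) = star y * (star a * a) * y := by
      rw [star_mul]; noncomm_ring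
    have h1 : star y * (star a * a) * y ≤ star y * algebraMap ℝ A (‖a‖^2) * y :=
      star_left_conjugate_le_conjugate CStarAlgebra.star_mul_le_algebraMap_norm_sq y
    have h2 : star y * algebraMap ℝ A (‖a‖^2) * y = (‖a‖^2) • (star y * y) := by
      rw [Algebra.algebraMap_eq_smul_one, mul_smul_comm, mul_one, smul_mul_assoc]
    have h3 : E (star (a * y) * (a * y)) ≤ (‖a‖^2) • E (star y * y) := by
      rw [hexp, ← hEsmulR, ← h2]
      exact hEmono h1
    have h4 : ‖E (star (a * y) * (a * y))‖ ≤ ‖a‖^2 * ‖E (star y * y)‖ := by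
      refine (CStarAlgebra.norm_le_norm_of_nonneg_of_le ?_ h3).trans ?_
      · have := hpos (a * y); exact this
      · rw [norm_smul, Real.norm_of_nonneg (sq_nonneg _)]
    calc normE E (a * y) ≤ Real.sqrt (‖a‖^2 * ‖E (star y * y)‖) := Real.sqrt_le_sqrt h4
      _ = ‖a‖ * normE E y := by
          rw [Real.sqrt_mul (sq_nonneg _), Real.sqrt_sq (norm_nonneg _), normE]
  -- normE (z * d) ≤ normE z * ‖d‖ for d ∈ D
  have hmulr : ∀ z₀ : A, ∀ d ∈ D, normE E (z₀ * d) ≤ normE E z₀ * ‖d‖ := by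
    intro z₀ d hd
    have hexp : star (z₀ * d) * (z₀ * d) = star d * (star z₀ * z₀) * d := by
      rw [star_mul]; noncomm_ring
    have h1 : E (star (z₀ * d) * (z₀ * d)) = star d * E (star z₀ * z₀) * d := by
      rw [hexp, hbimod _ (star_mem hd) _ hd]
    have h2 : ‖E (star (z₀ * d) * (z₀ * d))‖ ≤ ‖E (star z₀ * z₀)‖ * ‖d‖^2 := by
      rw [h1]
      calc ‖star d * E (star z₀ * z₀) * d‖ ≤ ‖star d * E (star z₀ * z₀)‖ * ‖d‖ :=
            norm_mul_le _ _
        _ ≤ (‖star d‖ * ‖E (star z₀ * z₀)‖) * ‖d‖ := by gcongr; exact norm_mul_le _ _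
        _ = ‖E (star z₀ * z₀)‖ * ‖d‖^2 := by rw [norm_star]; ring
    calc normE E (z₀ * d) ≤ Real.sqrt (‖E (star z₀ * z₀)‖ * ‖d‖^2) := Real.sqrt_le_sqrt h2
      _ = normE E z₀ * ‖d‖ := by
          rw [Real.sqrt_mul (norm_nonneg _), Real.sqrt_sq (norm_nonneg _), normE]
  -- ‖E b‖ ≤ ‖b‖
  have hcontr : ∀ b : A, ‖E b‖ ≤ ‖b‖ := by
    intro b
    have h1 : star (E b) * E b ≤ E (star b * b) := by
      have h0 := hpos (b - E b)
      rw [hQ b] at h0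
      exact sub_nonneg.mp h0
    have h2 : E (star b * b) ≤ algebraMap ℝ A (‖b‖^2) := by
      have := hEmono (CStarAlgebra.star_mul_le_algebraMap_norm_sq (a := b))
      rwa [Algebra.algebraMap_eq_smul_one (R := ℝ), hEsmulR, hE1,
        ← Algebra.algebraMap_eq_smul_one] at this
    have h3 : ‖star (E b) * E b‖ ≤ ‖algebraMap ℝ A (‖b‖^2)‖ :=
      CStarAlgebra.norm_le_norm_of_nonneg_of_le (star_mul_self_nonneg _) (h1.trans h2)
    rw [CStarRing.norm_star_mul_self, norm_algebraMap', Real.norm_of_nonneg (sq_nonneg _), sq] at h3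
    nlinarith [norm_nonneg (E b), norm_nonneg b]
  constructor
  · rw [hE1, sub_self]
    simp [normE]
  · intro a b
    set y := b - E b with hy
    set zz := a - E a with hzz
    set d := E b with hd
    have hdD : d ∈ D := hrange b
    have hEay : E (a * y) = E (a * b) - E a * d := by
      rw [hy, mul_sub, map_sub, hright _ _ hdD]
    have hdecomp : a * b - E (a * b) = (a * y - E (a * y)) + zz * d := by
      rw [hEay, hy, hzz]
      noncomm_ring
    calc normE E (a * b - E (a * b))
        = normE E ((a * y - E (a * y)) + zz * d) := by rw [hdecomp]
      _ ≤ normE E (a * y - E (a * y)) + normE E (zz * d) := hTri _ _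
      _ ≤ ‖a‖ * normE E y + normE E zz * ‖b‖ := by
          gcongr ?_ + ?_
          · exact (hred _).trans (hmull a y)
          · exact (hmulr zz d hdD).trans (by
              gcongr
              · exact hnormE_nonneg _
              · exact hcontr b)
      _ = ‖a‖ * normE E (b - E b) + normE E (a - E a) * ‖b‖ := by rw [hy, hzz]
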